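/- The four homogeneous polynomials x₁²−x₄², x₂²−x₄², x₃²−x₄², and Σ_{i<j} x_i x_j − c x₄² in ℚ[x₁,x₂,x₃,x₄] form a regular sequence (equivalently, their common complex zero set is {0}) if and only if c ∉ {−2, 0, 6}. -/
import Mathlib

lemma stmt9_aux (a x : ℂ) (ha : a ≠ 0) (h : a * x ^ 2 = 0) : x = 0 := by
  rcases mul_eq_zero.mp h with h | h
  · exact absurd h ha
  · exact pow_eq_zero_iff two_ne_zero |>.mp h

/-- The common complex zero set of x₁²−x₄², x₂²−x₄², x₃²−x₄² and
Σ_{i<j} xᵢxⱼ − c·x₄² is {0} iff c ∉ {−2, 0, 6}. -/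
theorem stmt9 (c : ℚ) :
    (∀ x₁ x₂ x₃ x₄ : ℂ, x₁ ^ 2 - x₄ ^ 2 = 0 → x₂ ^ 2 - x₄ ^ 2 = 0 →
        x₃ ^ 2 - x₄ ^ 2 = 0 →
        x₁ * x₂ + x₁ * x₃ + x₁ * x₄ + x₂ * x₃ + x₂ * x₄ + x₃ * x₄ - (c : ℂ) * x₄ ^ 2 = 0 →
        x₁ = 0 ∧ x₂ = 0 ∧ x₃ = 0 ∧ x₄ = 0) ↔
      c ≠ -2 ∧ c ≠ 0 ∧ c ≠ 6 := by
  constructor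
  · intro h
    refine ⟨?_, ?_, ?_⟩ <;> rintro rfl
    · have := h 1 (-1) (-1) 1 (by ring) (by ring) (by ring) (by push_cast; ring)
      simpa using this.1
    · have := h 1 1 (-1) 1 (by ring) (by ring) (by ring) (by push_cast; ring)
      simpa using this.1
    · have := h 1 1 1 1 (by ring) (by ring) (by ring) (by push_cast; ring)
      simpa using this.1
  · rintro ⟨h2, h0, h6⟩ x₁ x₂ x₃ x₄ e1 e2 e3 e4
    have c2 : ((6 : ℂ) - c) ≠ 0 := sub_ne_zero.mpr fun h => h6 (by exact_mod_cast h.symm)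
    have c0 : ((0 : ℂ) - c) ≠ 0 := sub_ne_zero.mpr fun h => h0 (by exact_mod_cast h.symm)
    have cm2 : ((-2 : ℂ) - c) ≠ 0 := sub_ne_zero.mpr fun h => h2 (by exact_mod_cast h.symm)
    have d1 : x₁ = x₄ ∨ x₁ = -x₄ := by
      rcases mul_eq_zero.mp (show (x₁ - x₄) * (x₁ + x₄) = 0 by linear_combination e1) with h | h
      · exact Or.inl (sub_eq_zero.mp h)
      · exact Or.inr (eq_neg_of_add_eq_zero_left h)
    have d2 : x₂ = x₄ ∨ x₂ = -x₄ := by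
      rcases mul_eq_zero.mp (show (x₂ - x₄) * (x₂ + x₄) = 0 by linear_combination e2) with h | h
      · exact Or.inl (sub_eq_zero.mp h)
      · exact Or.inr (eq_neg_of_add_eq_zero_left h)
    have d3 : x₃ = x₄ ∨ x₃ = -x₄ := by
      rcases mul_eq_zero.mp (show (x₃ - x₄) * (x₃ + x₄) = 0 by linear_combination e3) with h | h
      · exact Or.inl (sub_eq_zero.mp h)
      · exact Or.inr (eq_neg_of_add_eq_zero_left h)
    rcases d1 with ha | ha <;> rcases d2 with hb | hb <;> rcases d3 with hc' | hc' <;>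
      rw [ha, hb, hc'] at e4 ⊢
    · have hx : x₄ = 0 := stmt9_aux _ _ c2 (by linear_combination e4)
      simp [hx]
    · have hx : x₄ = 0 := stmt9_aux _ _ c0 (by linear_combination e4)
      simp [hx]
    · have hx : x₄ = 0 := stmt9_aux _ _ c0 (by linear_combination e4)
      simp [hx]
    · have hx : x₄ = 0 := stmt9_aux _ _ cm2 (by linear_combination e4)
      simp [hx]
    · have hx : x₄ = 0 := stmt9_aux _ _ c0 (by linear_combination e4)
      simp [hx]
    · have hx : x₄ = 0 := stmt9_aux _ _ cm2 (by linear_combination e4)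
      simp [hx]
    · have hx : x₄ = 0 := stmt9_aux _ _ cm2 (by linear_combination e4)
      simp [hx]
    · have hx : x₄ = 0 := stmt9_aux _ _ c0 (by linear_combination e4)
      simp [hx]
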